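/- Let \Omega = \{0,1,\dots,m-1\} with a full-support probability measure \pi, and let f, g : \Omega^n \to \R be monotone functions. Then \rho \mapsto E_{x \sim \pi^{\otimes n}}[T_\rho f(x) \cdot g(x)] is a nondecreasing function of \rho on [0,1]. -/
import Mathlib
open Finset

lemma cheb {m : ℕ} (w : Fin m → ℝ) (hw : ∀ a, 0 ≤ w a) (F G : Fin m → ℝ)
    (hF : Monotone F) (hG : Monotone G) :
    (∑ a, w a * F a) * (∑ b, w b * G b) ≤ (∑ a, w a) * ∑ a, w a * (F a * G a) := by
  have key : 0 ≤ ∑ a, ∑ b, w a * w b * ((F a - F b) * (G a - G b)) := by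
    apply Finset.sum_nonneg; intro a _
    apply Finset.sum_nonneg; intro b _
    apply mul_nonneg (mul_nonneg (hw a) (hw b))
    rcases le_total a b with h | h
    · nlinarith [hF h, hG h]
    · exact mul_nonneg (by linarith [hF h]) (by linarith [hG h])
  have expand : ∑ a, ∑ b, w a * w b * ((F a - F b) * (G a - G b))
      = 2 * ((∑ a, w a) * (∑ a, w a * (F a * G a)) - (∑ a, w a * F a) * (∑ b, w b * G b)) := by
    have h1 : ∀ a b : Fin m, w a * w b * ((F a - F b) * (G a - G b))
        = (w a * (F a * G a)) * w b + w a * (w b * (F b * G b))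
          - (w a * F a) * (w b * G b) - (w a * G a) * (w b * F b) := by
      intros; ring
    simp only [h1, Finset.sum_sub_distrib, Finset.sum_add_distrib, ← Finset.mul_sum,
      ← Finset.sum_mul]
    ring
  linarith [key, expand ▸ key]

lemma chebInner {m : ℕ} (w : Fin m → ℝ) (hw : ∀ a, 0 ≤ w a) (hsum : ∑ a, w a = 1)
    (F G : Fin m → ℝ) (hF : Monotone F) (hG : Monotone G) :
    0 ≤ ∑ a, ∑ b, (w a * ((if b = a then (1:ℝ) else 0) - w b)) * (F b * G a) := by
  have h1 : ∀ a : Fin m, ∑ b, (w a * ((if b = a then (1:ℝ) else 0) - w b)) * (F b * G a)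
      = w a * (F a * G a) - ∑ b, (w a * G a) * (w b * F b) := by
    intro a
    have : ∀ b : Fin m, (w a * ((if b = a then (1:ℝ) else 0) - w b)) * (F b * G a)
        = (if b = a then w a * (F a * G a) else 0) - (w a * G a) * (w b * F b) := by
      intro b; by_cases h : b = a <;> simp [h] <;> ring
    simp only [this, Finset.sum_sub_distrib, Finset.sum_ite_eq' Finset.univ a]
    simp
  simp only [h1, Finset.sum_sub_distrib, ← Finset.mul_sum, ← Finset.sum_mul]
  have := cheb w hw F G hF hG
  rw [hsum, one_mul] at this
  have e : ∑ a, w a * G a * ∑ b, w b * F b = (∑ a, w a * F a) * (∑ b, w b * G b) := by rw [← Finset.sum_mul, mul_comm]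
  linarith [this, e]

lemma sum_update {m n : ℕ} (j : Fin n) (h : (Fin n → Fin m) → ℝ) :
    ∑ x : Fin n → Fin m, ∑ a : Fin m, h (Function.update x j a)
      = (m : ℝ) * ∑ x : Fin n → Fin m, h x := by
  classical
  set e := Equiv.funSplitAt j (Fin m) with he
  have upd : ∀ (c a : Fin m) (z : { i // i ≠ j } → Fin m),
      Function.update (e.symm (c, z)) j a = e.symm (a, z) := by
    intro c a z
    funext i
    by_cases hi : i = j
    · subst hi; simp [he, Equiv.funSplitAt, Equiv.piSplitAt]
    · simp [he, Function.update_of_ne hi, Equiv.funSplitAt, Equiv.piSplitAt, hi]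
  rw [← Equiv.sum_comp e.symm (fun x => ∑ a : Fin m, h (Function.update x j a)),
    ← Equiv.sum_comp e.symm h]
  rw [Fintype.sum_prod_type, Fintype.sum_prod_type]
  simp only [upd]
  rw [Finset.sum_const, Finset.card_univ, Fintype.card_fin, nsmul_eq_mul]
  congr 1
  exact Finset.sum_comm

def Psi {m n : ℕ} (w : Fin m → ℝ) (f g : (Fin n → Fin m) → ℝ) (r : Fin n → ℝ) : ℝ :=
  ∑ x : Fin n → Fin m, ∑ y : Fin n → Fin m,
    (∏ i, w (x i)) *
      ((∏ i, (r i * (if y i = x i then (1:ℝ) else 0) + (1 - r i) * w (y i))) * (f y * g x))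

lemma psi_expand {m n : ℕ} (w : Fin m → ℝ) (f g : (Fin n → Fin m) → ℝ) (r : Fin n → ℝ)
    (j : Fin n) (u : ℝ) :
    Psi w f g (Function.update r j u)
      = ∑ x : Fin n → Fin m, ∑ y : Fin n → Fin m,
        (∏ i, w (x i)) *
          ((u * (if y j = x j then (1:ℝ) else 0) + (1 - u) * w (y j)) *
            ((∏ i ∈ {j}ᶜ, (r i * (if y i = x i then (1:ℝ) else 0) + (1 - r i) * w (y i))) *
              (f y * g x))) := by
  unfold Psi
  apply Finset.sum_congr rfl; intro x _
  apply Finset.sum_congr rfl; intro y _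
  have hprod : (∏ i ∈ {j}ᶜ, (Function.update r j u i * (if y i = x i then (1:ℝ) else 0)
      + (1 - Function.update r j u i) * w (y i)))
      = ∏ i ∈ {j}ᶜ, (r i * (if y i = x i then (1:ℝ) else 0) + (1 - r i) * w (y i)) :=
    Finset.prod_congr rfl (fun i hi => by
      rw [Function.update_of_ne (by simpa using hi)])
  rw [Fintype.prod_eq_mul_prod_compl j
    (fun i => (Function.update r j u i * (if y i = x i then (1:ℝ) else 0)
      + (1 - Function.update r j u i) * w (y i))), Function.update_self, hprod]
  ring
lemma step {m n : ℕ} (w : Fin m → ℝ) (hw : ∀ a, 0 < w a) (hsum : ∑ a, w a = 1)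
    (f g : (Fin n → Fin m) → ℝ) (hf : Monotone f) (hg : Monotone g)
    (r : Fin n → ℝ) (hr : ∀ i, 0 ≤ r i ∧ r i ≤ 1) (j : Fin n) {s t : ℝ}
    (hs : 0 ≤ s) (hst : s ≤ t) (ht : t ≤ 1) :
    Psi w f g (Function.update r j s) ≤ Psi w f g (Function.update r j t) := by
  classical
  set Q : (Fin n → Fin m) → (Fin n → Fin m) → ℝ := fun x y =>
    ∏ i ∈ {j}ᶜ, (r i * (if y i = x i then (1:ℝ) else 0) + (1 - r i) * w (y i)) with hQdef
  have hQ : ∀ x y, 0 ≤ Q x y := by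
    intro x y
    apply Finset.prod_nonneg; intro i _
    have h1 : (0:ℝ) ≤ (if y i = x i then (1:ℝ) else 0) := by positivity
    have := hr i
    have := (hw (y i)).le
    nlinarith [this]
  set H : (Fin n → Fin m) → (Fin n → Fin m) → ℝ := fun x y =>
    (∏ i, w (x i)) *
      (((if y j = x j then (1:ℝ) else 0) - w (y j)) * (Q x y * (f y * g x))) with hHdef
  set A : ℝ := ∑ x : Fin n → Fin m, ∑ y : Fin n → Fin m, H x y with hAdef
  have hm : 0 < m := by
    rcases Nat.eq_zero_or_pos m with h | h
    · subst h; simp at hsum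
    · exact h
  -- key identity
  have key : Psi w f g (Function.update r j t) - Psi w f g (Function.update r j s)
      = (t - s) * A := by
    rw [psi_expand, psi_expand, hAdef, Finset.mul_sum, ← Finset.sum_sub_distrib]
    apply Finset.sum_congr rfl; intro x _
    rw [Finset.mul_sum, ← Finset.sum_sub_distrib]
    apply Finset.sum_congr rfl; intro y _
    simp only [hHdef, hQdef]
    ring
  -- A is nonnegative
  have hA : 0 ≤ A := by
    have inner : ∀ x y : Fin n → Fin m,
        0 ≤ ∑ a : Fin m, ∑ b : Fin m, H (Function.update x j a) (Function.update y j b) := by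
      intro x y
      have hF : Monotone fun b => f (Function.update y j b) := by
        apply hf.comp
        intro b b' hbb i
        by_cases hi : i = j
        · subst hi; simp [hbb]
        · simp [Function.update_of_ne hi]
      have hG : Monotone fun a => g (Function.update x j a) := by
        apply hg.comp
        intro b b' hbb i
        by_cases hi : i = j
        · subst hi; simp [hbb]
        · simp [Function.update_of_ne hi]
      have hrw : ∀ a b : Fin m, H (Function.update x j a) (Function.update y j b)
          = ((∏ i ∈ {j}ᶜ, w (x i)) * Q x y) *
            ((w a * ((if b = a then (1:ℝ) else 0) - w b)) *
              ((fun b => f (Function.update y j b)) b * (fun a => g (Function.update x j a)) a)) := by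
        intro a b
        have e1 : (∏ i, w (Function.update x j a i)) = w a * ∏ i ∈ {j}ᶜ, w (x i) := by
          rw [Fintype.prod_eq_mul_prod_compl j (fun i => w (Function.update x j a i)),
            Function.update_self]
          congr 1
          exact Finset.prod_congr rfl fun i hi => by
            rw [Function.update_of_ne (by simpa using hi)]
        have e2 : Q (Function.update x j a) (Function.update y j b) = Q x y := by
          simp only [hQdef]
          exact Finset.prod_congr rfl fun i hi => by
            rw [Function.update_of_ne (by simpa using hi),
              Function.update_of_ne (by simpa using hi)]
        simp only [hHdef, e1, e2, Function.update_self]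
        ring
      simp only [hrw]
      simp only [← Finset.mul_sum]
      exact mul_nonneg (mul_nonneg (Finset.prod_nonneg fun i _ => (hw _).le) (hQ x y))
        (chebInner w (fun a => (hw a).le) hsum _ _ hF hG)
    have h1 : (m:ℝ) * A = ∑ x : Fin n → Fin m, ∑ a : Fin m, ∑ y : Fin n → Fin m,
        H (Function.update x j a) y := (sum_update j (fun x => ∑ y, H x y)).symm
    have h3 : (m:ℝ)^2 * A = ∑ x : Fin n → Fin m, ∑ a : Fin m, ∑ y : Fin n → Fin m,
        ∑ b : Fin m, H (Function.update x j a) (Function.update y j b) := by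
      rw [pow_two, mul_assoc, h1, Finset.mul_sum]
      apply Finset.sum_congr rfl; intro x _
      rw [Finset.mul_sum]
      apply Finset.sum_congr rfl; intro a _
      exact (sum_update j (H (Function.update x j a))).symm
    have h4 : 0 ≤ (m:ℝ)^2 * A := by
      rw [h3]
      apply Finset.sum_nonneg; intro x _
      rw [Finset.sum_comm]
      apply Finset.sum_nonneg; intro y _
      exact inner x y
    have hc : (0:ℝ) < (m:ℝ)^2 := by
      have : (0:ℝ) < (m:ℝ) := by exact_mod_cast hm
      positivity
    exact le_of_mul_le_mul_left (by simpa using h4) hc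
  nlinarith [key, hA, hst]

/-- For monotone `f, g : {0,…,m-1}^n → ℝ`, the noisy correlation
`ρ ↦ E_{x ~ π^⊗n}[T_ρ f(x) · g(x)]` is nondecreasing on `[0,1]`, where `T_ρ` is the
replacement noise operator with respect to the full-support measure `π`. -/
theorem stmt3 (m n : ℕ) (w : Fin m → ℝ) (hw : ∀ a, 0 < w a) (hsum : ∑ a, w a = 1)
    (f g : (Fin n → Fin m) → ℝ) (hf : Monotone f) (hg : Monotone g) :
    MonotoneOn (fun ρ => ∑ x : Fin n → Fin m, ∑ y : Fin n → Fin m,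
        (∏ i, w (x i)) *
          ((∏ i, (ρ * (if y i = x i then (1:ℝ) else 0) + (1 - ρ) * w (y i))) * (f y * g x)))
      (Set.Icc (0:ℝ) 1) := by
  classical
  intro ρ hρ ρ' hρ' hle
  show Psi w f g (fun _ => ρ) ≤ Psi w f g (fun _ => ρ')
  have key : ∀ S : Finset (Fin n),
      Psi w f g (fun _ => ρ) ≤ Psi w f g (S.piecewise (fun _ => ρ') (fun _ => ρ)) := by
    intro S
    induction S using Finset.induction_on with
    | empty => rw [Finset.piecewise_empty]
    | @insert j S hj ih =>
      refine le_trans ih ?_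
      have e1 : S.piecewise (fun _ => ρ') (fun _ => ρ)
          = Function.update (S.piecewise (fun _ => ρ') (fun _ => ρ)) j ρ := by
        nth_rewrite 1 [← Function.update_eq_self j (S.piecewise (fun _ => ρ') (fun _ => ρ))]
        rw [Finset.piecewise_eq_of_notMem _ _ _ hj]
      rw [e1, Finset.piecewise_insert]
      apply step w hw hsum f g hf hg _ ?_ j hρ.1 hle hρ'.2
      intro i
      by_cases hi : i ∈ S
      · rw [Finset.piecewise_eq_of_mem _ _ _ hi]
        exact ⟨hρ'.1, hρ'.2⟩
      · rw [Finset.piecewise_eq_of_notMem _ _ _ hi]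
        exact ⟨hρ.1, hρ.2⟩
  have := key Finset.univ
  rwa [Finset.piecewise_univ] at this
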